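/- Let L > 0, x₀ ∈ [0, L/2), q = (L/2 - x₀)/(L/2 + x₀), p ∈ ℕ with Φ(x) = √(2/L)·sin((pπ/L)(L/2 - x)) satisfying Φ(x₀) = 0. Define Υ(x) = -√q·Φ(x) on [-L/2, x₀] and Υ(x) = (1/√q)·Φ(x) on (x₀, L/2]. Then ∫_{-L/2}^{L/2} x·Υ(x)² dx = x₀. -/

import Mathlib

open Real MeasureTheory intervalIntegral

theorem stmt_9 (L x₀ : ℝ) (hL : 0 < L) (hx₀ : 0 ≤ x₀) (hx₀' : x₀ < L/2)
    (q : ℝ) (hq : q = (L/2 - x₀)/(L/2 + x₀))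
    (p : ℕ) (hp : 0 < p)
    (Φ : ℝ → ℝ) (hΦ : ∀ x, Φ x = Real.sqrt (2/L) * Real.sin ((p*π/L)*(L/2 - x)))
    (hΦ0 : Φ x₀ = 0)
    (Υ : ℝ → ℝ)
    (hΥ : ∀ x, Υ x = if x ≤ x₀ then -Real.sqrt q * Φ x else (1/Real.sqrt q) * Φ x) :
    (∫ x in (-(L/2))..(L/2), x * (Υ x)^2) = x₀ := by
  have hπ := Real.pi_pos
  set a := (p : ℝ) * π / L with ha_def
  have ha : 0 < a := by
    apply div_pos _ hL
    exact mul_pos (by exact_mod_cast hp) hπ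
  have hane : a ≠ 0 := ne_of_gt ha
  have hq0 : 0 < q := by
    rw [hq]; apply div_pos <;> linarith
  have hsqq : Real.sqrt q ^ 2 = q := Real.sq_sqrt hq0.le
  have h2L : (0:ℝ) < 2 / L := by positivity
  -- sin vanishes at the three relevant points
  have hsin0 : Real.sin (a * (L/2 - x₀)) = 0 := by
    have h := (hΦ x₀).symm.trans hΦ0
    have hs : Real.sqrt (2/L) ≠ 0 := by positivity
    exact (mul_eq_zero.mp h).resolve_left hs
  have hsinL : Real.sin (a * (L/2 - (-(L/2)))) = 0 := by
    have : a * (L/2 - (-(L/2))) = p * π := by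
      rw [ha_def]; field_simp; norm_num
    rw [this, Real.sin_nat_mul_pi]
  have hsinR : Real.sin (a * (L/2 - L/2)) = 0 := by
    simp
  -- key integral computation
  have key : ∀ u v : ℝ, Real.sin (a * (L/2 - u)) = 0 → Real.sin (a * (L/2 - v)) = 0 →
      (∫ x in u..v, x * Real.sin (a * (L/2 - x)) ^ 2) = (v^2 - u^2)/4 := by
    intro u v hu hv
    set F : ℝ → ℝ := fun x => x^2/4 - Real.cos (2*(a*(L/2-x)))/(8*a^2)
      + x * Real.sin (2*(a*(L/2-x)))/(4*a) with hF_def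
    have hF : ∀ x : ℝ, HasDerivAt F (x * Real.sin (a * (L/2 - x)) ^ 2) x := by
      intro x
      have h1 : HasDerivAt (fun y : ℝ => 2*(a*(L/2-y))) (2*(a*(-1))) x := by
        have := (((hasDerivAt_id x).const_sub (L/2)).const_mul a).const_mul 2
        simpa using this
      have hc := h1.cos
      have hs := h1.sin
      have hx2 := hasDerivAt_pow 2 x
      have hD := ((hx2.div_const 4).sub (hc.div_const (8*a^2))).add
        (((hasDerivAt_id x).mul hs).div_const (4*a))
      convert hD using 1
      · rfl
      · rfl
      · rfl
      rw [Real.cos_two_mul, Real.sin_two_mul]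
      have hpyth := Real.sin_sq_add_cos_sq (a*(L/2-x))
      generalize Real.sin (a*(L/2-x)) = s at hpyth ⊢
      generalize Real.cos (a*(L/2-x)) = c at hpyth ⊢
      simp only [id]
      field_simp
      linear_combination (32*a*x) * hpyth
    have hcont : Continuous fun x : ℝ => x * Real.sin (a * (L/2 - x)) ^ 2 := by
      fun_prop
    rw [intervalIntegral.integral_eq_sub_of_hasDerivAt (fun x _ => hF x)
      (hcont.intervalIntegrable u v)]
    have hcosu : Real.cos (2*(a*(L/2-u))) = 1 := by
      rw [Real.cos_two_mul]
      have := Real.sin_sq_add_cos_sq (a*(L/2-u))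
      rw [hu] at this; nlinarith
    have hcosv : Real.cos (2*(a*(L/2-v))) = 1 := by
      rw [Real.cos_two_mul]
      have := Real.sin_sq_add_cos_sq (a*(L/2-v))
      rw [hv] at this; nlinarith
    have hsinu : Real.sin (2*(a*(L/2-u))) = 0 := by
      rw [Real.sin_two_mul, hu]; ring
    have hsinv : Real.sin (2*(a*(L/2-v))) = 0 := by
      rw [Real.sin_two_mul, hv]; ring
    simp only [hF_def, hcosu, hcosv, hsinu, hsinv]
    ring
  -- squares of Φ and Υ
  have hΦsq : ∀ x, (Φ x)^2 = (2/L) * Real.sin (a * (L/2 - x)) ^ 2 := by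
    intro x
    rw [hΦ x, mul_pow, Real.sq_sqrt h2L.le]
  have hle1 : -(L/2) ≤ x₀ := by linarith
  have hle2 : x₀ ≤ L/2 := by linarith
  -- left piece
  have eq1 : ∀ x ∈ Set.uIcc (-(L/2)) x₀,
      x * (Υ x)^2 = (q * (2/L)) * (x * Real.sin (a * (L/2 - x)) ^ 2) := by
    intro x hx
    rw [Set.uIcc_of_le hle1] at hx
    rw [hΥ x, if_pos hx.2, neg_mul, neg_sq, mul_pow, hsqq, hΦsq x]
    ring
  -- right piece
  have eq2 : ∀ x ∈ Set.uIcc x₀ (L/2),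
      x * (Υ x)^2 = ((1/q) * (2/L)) * (x * Real.sin (a * (L/2 - x)) ^ 2) := by
    intro x hx
    rw [Set.uIcc_of_le hle2] at hx
    by_cases h : x ≤ x₀
    · have hxe : x = x₀ := le_antisymm h hx.1
      rw [hΥ x, if_pos h, hxe, hΦ0, hsin0]
      ring
    · rw [hΥ x, if_neg h, mul_pow, div_pow, one_pow, hsqq, hΦsq x]
      ring
  have I1 : (∫ x in (-(L/2))..x₀, x * (Υ x)^2)
      = (q * (2/L)) * ((x₀^2 - (-(L/2))^2)/4) := by
    rw [intervalIntegral.integral_congr eq1, intervalIntegral.integral_const_mul,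
      key _ _ hsinL hsin0]
  have I2 : (∫ x in x₀..(L/2), x * (Υ x)^2)
      = ((1/q) * (2/L)) * (((L/2)^2 - x₀^2)/4) := by
    rw [intervalIntegral.integral_congr eq2, intervalIntegral.integral_const_mul,
      key _ _ hsin0 hsinR]
  -- integrability
  have hcontg : Continuous fun x : ℝ => x * Real.sin (a * (L/2 - x)) ^ 2 := by
    fun_prop
  have int1 : IntervalIntegrable (fun x => x * (Υ x)^2) volume (-(L/2)) x₀ := by
    apply ((continuous_const.mul hcontg : Continuous fun x => (q * (2/L)) * (x * Real.sin (a * (L/2 - x)) ^ 2)).intervalIntegrable (-(L/2)) x₀).congr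
    intro x hx
    exact (eq1 x (Set.uIoc_subset_uIcc hx)).symm
  have int2 : IntervalIntegrable (fun x => x * (Υ x)^2) volume x₀ (L/2) := by
    apply ((continuous_const.mul hcontg : Continuous fun x => ((1/q) * (2/L)) * (x * Real.sin (a * (L/2 - x)) ^ 2)).intervalIntegrable x₀ (L/2)).congr
    intro x hx
    exact (eq2 x (Set.uIoc_subset_uIcc hx)).symm
  rw [← intervalIntegral.integral_add_adjacent_intervals int1 int2, I1, I2]
  have h1 : L/2 + x₀ ≠ 0 := by linarith
  have h2 : L/2 - x₀ ≠ 0 := by linarith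
  have h3 : L ≠ 0 := ne_of_gt hL
  have hD : (L/2)^2 - x₀^2 ≠ 0 := by
    intro h; apply h2; nlinarith
  have key2 : 1/q - q = (2*L*x₀) / ((L/2)^2 - x₀^2) := by
    rw [hq, one_div_div, div_sub_div _ _ h2 h1, div_eq_div_iff (mul_ne_zero h2 h1) hD]
    ring
  have e : q * (2/L) * ((x₀^2 - (-(L/2))^2)/4) + (1/q) * (2/L) * (((L/2)^2 - x₀^2)/4)
      = ((L/2)^2 - x₀^2)/(2*L) * (1/q - q) := by ring
  rw [e, key2, div_mul_div_comm, div_eq_iff (by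
    intro h
    rcases mul_eq_zero.mp h with h' | h'
    · exact h3 (by linarith)
    · exact hD h')]
  ring
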